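/- With λ₀ = (i/(3√3)) k^3, u = 0, and φ₀ as the vacuum eigenfunction φ₀ = exp(p x + 9 p^5 t)(1 + exp(k x - k^5 t - 2πi/3 + c)), p = (-1/2 + (√3/6) i) k, the quantity a = -2λ₀ φ₀ / (u φ₀ + φ₀_xx) = -2λ₀ φ₀ / φ₀_xx equals -k( (√3/3) i + tanh η ), where η = (1/2)(k x - k^5 t + c). -/

import Mathlib

open Complex

/-- Partial derivative in the first (spatial) variable. -/
noncomputable def dx (u : ℝ → ℝ → ℂ) : ℝ → ℝ → ℂ := fun x t => deriv (fun y => u y t) x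

lemma hasDerivAt_exp_affine (a b : ℂ) (y : ℝ) :
    HasDerivAt (fun x : ℝ => Complex.exp (a * x + b)) (a * Complex.exp (a * y + b)) y := by
  have h : HasDerivAt (fun x : ℝ => a * (x : ℂ) + b) a y := by
    simpa using ((Complex.ofRealCLM.hasDerivAt (x := y)).const_mul a).add_const b
  simpa [mul_comm] using h.cexp

lemma dx_two_exp (c₁ c₂ a₁ a₂ : ℂ) (b₁ b₂ : ℝ → ℂ) :
    dx (fun (x t : ℝ) => c₁ * Complex.exp (a₁ * (x:ℂ) + b₁ t) + c₂ * Complex.exp (a₂ * (x:ℂ) + b₂ t))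
      = fun (x t : ℝ) => c₁ * a₁ * Complex.exp (a₁ * (x:ℂ) + b₁ t)
          + c₂ * a₂ * Complex.exp (a₂ * (x:ℂ) + b₂ t) := by
  funext x t
  have h := ((hasDerivAt_exp_affine a₁ (b₁ t) x).const_mul c₁).add
    ((hasDerivAt_exp_affine a₂ (b₂ t) x).const_mul c₂)
  simp only [dx]
  exact (h.deriv).trans (by ring)

lemma zeta_val : Complex.exp (-(2 * (Real.pi : ℂ) * Complex.I) / 3)
    = -1/2 - (Real.sqrt 3 / 2 : ℝ) * Complex.I := by
  have h1 : -(2 * (Real.pi : ℂ) * Complex.I) / 3 = ((-(2 * Real.pi / 3) : ℝ) : ℂ) * Complex.I := by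
    push_cast; ring
  rw [h1, Complex.exp_mul_I]
  have hc : Real.cos (-(2 * Real.pi / 3)) = -(1/2) := by
    rw [Real.cos_neg, show 2 * Real.pi / 3 = Real.pi - Real.pi / 3 by ring,
      Real.cos_pi_sub, Real.cos_pi_div_three]
  have hsin : Real.sin (-(2 * Real.pi / 3)) = -(Real.sqrt 3 / 2) := by
    rw [Real.sin_neg, show 2 * Real.pi / 3 = Real.pi - Real.pi / 3 by ring,
      Real.sin_pi_sub, Real.sin_pi_div_three]
  rw [show Complex.cos ((-(2 * Real.pi / 3) : ℝ) : ℂ) = ((Real.cos (-(2 * Real.pi / 3)) : ℝ) : ℂ)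
      from (Complex.ofReal_cos _).symm,
    show Complex.sin ((-(2 * Real.pi / 3) : ℝ) : ℂ) = ((Real.sin (-(2 * Real.pi / 3)) : ℝ) : ℂ)
      from (Complex.ofReal_sin _).symm, hc, hsin]
  push_cast; ring

theorem darboux_variable_vacuum (k : ℝ) (c lam0 p : ℂ) (u φ : ℝ → ℝ → ℂ)
    (hlam : lam0 = Complex.I / (3 * Real.sqrt 3) * (k : ℂ)^3)
    (hp : p = (-(1/2) + (Real.sqrt 3 / 6) * Complex.I) * (k : ℂ))
    (hu : u = fun _ _ => 0)
    (hφ : φ = fun (x t : ℝ) => Complex.exp (p * (x : ℂ) + 9 * p^5 * (t : ℂ)) *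
      (1 + Complex.exp ((k : ℂ) * (x : ℂ) - (k : ℂ)^5 * (t : ℂ)
        - 2 * (Real.pi : ℂ) * Complex.I / 3 + c))) :
    ∀ x t, dx (dx φ) x t ≠ 0 →
      -2 * lam0 * φ x t / (u x t * φ x t + dx (dx φ) x t)
        = -(k : ℂ) * ((Real.sqrt 3 / 3) * Complex.I
            + Complex.tanh ((1/2) * ((k : ℂ) * (x : ℂ) - (k : ℂ)^5 * (t : ℂ) + c))) := by
  intro x t hne
  set s : ℝ := Real.sqrt 3 with hsdef
  have hs2 : ((s : ℂ))^2 = 3 := by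
    norm_cast
    rw [Real.sq_sqrt]; norm_num
  set ζ : ℂ := -1/2 - (s / 2 : ℝ) * Complex.I with hζdef
  -- rewrite φ as a sum of two exponentials
  have hφ' : φ = fun (x t : ℝ) =>
      1 * Complex.exp (p * x + (9 * p^5 * t))
      + 1 * Complex.exp ((p + k) * x + ((9 * p^5 - (k:ℂ)^5) * t
          + (- 2 * (Real.pi : ℂ) * Complex.I / 3 + c))) := by
    rw [hφ]; funext x t
    rw [show (p + (k:ℂ)) * x + ((9 * p^5 - (k:ℂ)^5) * t + (- 2 * (Real.pi : ℂ) * Complex.I / 3 + c))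
        = (p * x + 9 * p^5 * t) + ((k:ℂ) * x - (k:ℂ)^5 * t - 2 * (Real.pi : ℂ) * Complex.I / 3 + c)
        by ring, Complex.exp_add]
    simp only [Complex.exp_add]
    ring
  have hDxx : dx (dx φ) = fun (x t : ℝ) =>
      1 * p * p * Complex.exp (p * x + (9 * p^5 * t))
      + 1 * (p + k) * (p + k) * Complex.exp ((p + k) * x + ((9 * p^5 - (k:ℂ)^5) * t
          + (- 2 * (Real.pi : ℂ) * Complex.I / 3 + c))) := by
    rw [hφ', dx_two_exp, dx_two_exp]
  -- abbreviations
  set E : ℂ := Complex.exp (p * x + (9 * p^5 * t)) with hE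
  set F : ℂ := Complex.exp ((1/2) * ((k : ℂ) * x - (k : ℂ)^5 * t + c)) with hF
  have hE0 : E ≠ 0 := Complex.exp_ne_zero _
  have hF0 : F ≠ 0 := Complex.exp_ne_zero _
  have hsplit : Complex.exp ((p + k) * x + ((9 * p^5 - (k:ℂ)^5) * t
      + (- 2 * (Real.pi : ℂ) * Complex.I / 3 + c))) = E * (F^2 * ζ) := by
    rw [show (p + (k:ℂ)) * x + ((9 * p^5 - (k:ℂ)^5) * t + (- 2 * (Real.pi : ℂ) * Complex.I / 3 + c))
        = (p * x + 9 * p^5 * t) + ((((1/2) * ((k : ℂ) * x - (k : ℂ)^5 * t + c))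
          + ((1/2) * ((k : ℂ) * x - (k : ℂ)^5 * t + c)))
          + (-(2 * (Real.pi : ℂ) * Complex.I) / 3)) by ring,
      hE, hF, hζdef]
    simp only [Complex.exp_add]
    rw [zeta_val, ← hsdef]
    push_cast
    ring
  have hxx : dx (dx φ) x t = E * (p^2 + (p + k)^2 * F^2 * ζ) := by
    rw [hDxx]; simp only []; rw [hsplit, ← hE]; ring
  have hfac : p^2 + (p + k)^2 * F^2 * ζ = (k:ℂ)^2 * ((1 - s * Complex.I)/6) * (1 + F^2) := by
    rw [hp, hζdef]
    push_cast
    linear_combination ((k:ℂ)^2 * (-(1/36) + F^2 * (7 + (s:ℂ) * Complex.I) / 72)) * hs2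
      + ((s:ℂ)^2 * (k:ℂ)^2 / 36 - 7 * (s:ℂ)^2 * (k:ℂ)^2 * F^2 / 72
        - (s:ℂ)^3 * Complex.I * (k:ℂ)^2 * F^2 / 72) * Complex.I_sq
  have hnz : (k:ℂ)^2 * ((1 - s * Complex.I)/6) * (1 + F^2) ≠ 0 := by
    rw [← hfac]
    intro h
    apply hne
    rw [hxx, h, mul_zero]
  have hk0 : (k : ℂ) ≠ 0 := by
    intro h; exact hnz (by rw [h]; ring)
  have hFF : (1 : ℂ) + F^2 ≠ 0 := by
    intro h; exact hnz (by rw [h]; ring)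
  have hm : ((1 : ℂ) - s * Complex.I) ≠ 0 := by
    intro h; exact hnz (by rw [h]; ring)
  have hs0 : ((s : ℂ)) ≠ 0 := by
    intro h
    rw [h] at hs2; norm_num at hs2
  -- tanh formula
  have hFinv : F + F⁻¹ ≠ 0 := by
    intro h
    apply hFF
    have h2 : (F + F⁻¹) * F = 1 + F^2 := by field_simp; ring
    rw [h, zero_mul] at h2
    exact h2.symm
  have htanh : Complex.tanh ((1/2) * ((k : ℂ) * x - (k : ℂ)^5 * t + c))
      = (F^2 - 1) / (F^2 + 1) := by
    rw [Complex.tanh_eq_sinh_div_cosh, Complex.sinh, Complex.cosh, Complex.exp_neg, ← hF,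
      div_div_div_comm, div_self (two_ne_zero), div_one,
      div_eq_div_iff hFinv (by rw [add_comm]; exact hFF)]
    linear_combination (-2 * F) * (mul_inv_cancel₀ hF0)
  have hφval : φ x t = E * (1 + F^2 * ζ) := by
    rw [hφ']; simp only []; rw [hsplit]; ring
  have hQ : F^2 + 1 ≠ 0 := by rw [add_comm]; exact hFF
  rw [hu, htanh, hφval, hxx, hfac, hlam, hζdef]
  simp only [zero_mul, zero_add]
  rw [div_eq_iff (mul_ne_zero hE0 hnz)]
  push_cast
  field_simp
  linear_combination
    ((1 + F^2) * (Complex.I * (F^2 + 1) + (s:ℂ) * (F^2 + 1) - 3 * Complex.I * (F^2 - 1))) * hs2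
    + ((1 + F^2) * (6 * (s:ℂ) * F^2 - (s:ℂ)^3 * (F^2 + 1))) * Complex.I_sq
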